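/- Let (x₁, x₂) be a centered bivariate Gaussian with unit variances and correlation ρ ∈ (-1, 1). Then E[max(x₁,0)·max(x₂,0)] = (1/(2π))·(ρ·arcsin(ρ) + √(1-ρ²)) + ρ/4. -/

import Mathlib

open MeasureTheory Real

/-- Density of the centered bivariate Gaussian with unit variances and
correlation ρ. -/
noncomputable def biPdfStd (ρ : ℝ) (x y : ℝ) : ℝ :=
  (2 * Real.pi * Real.sqrt (1 - ρ^2))⁻¹ *
    Real.exp (-(1 / (2 * (1 - ρ^2))) * (x^2 - 2 * ρ * x * y + y^2))

open Set in
/-- The radial integral: `∫₀^∞ r³ e^{-r²/2} dr = 2`. -/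
lemma relu_radial_integral : ∫ r in Ioi (0:ℝ), r^3 * Real.exp (-r^2/2) = 2 := by
  have h := integral_Ioi_of_hasDerivAt_of_nonneg (g := fun r : ℝ => -(r^2+2) * Real.exp (-r^2/2))
    (g' := fun r : ℝ => r^3 * Real.exp (-r^2/2)) (a := 0) (l := 0)
    ?_ ?_ ?_ ?_
  · rw [h]; norm_num
  · exact (Continuous.continuousWithinAt (by continuity))
  · intro x hx
    have h1 : HasDerivAt (fun r : ℝ => -(r^2+2)) (-(2*x)) x := by
      have h0 := ((hasDerivAt_pow 2 x).add_const 2).neg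
      exact h0.congr_deriv (by norm_num)
    have h2 : HasDerivAt (fun r : ℝ => Real.exp (-r^2/2)) (Real.exp (-x^2/2) * (-(2*x)/2)) x := by
      have h3 : HasDerivAt (fun r : ℝ => -r^2/2) (-(2*x)/2) x := by
        simpa using (((hasDerivAt_pow 2 x)).neg.div_const 2)
      exact (Real.hasDerivAt_exp _).comp x h3
    have := h1.mul h2
    exact this.congr_deriv (by ring)
  · intro x hx
    have : (0:ℝ) < x := hx
    positivity
  · have h1 : Filter.Tendsto (fun t : ℝ => (2*t+2) * Real.exp (-t)) Filter.atTop (nhds 0) := by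
      have ha := Real.tendsto_pow_mul_exp_neg_atTop_nhds_zero 1
      have hb := Real.tendsto_exp_neg_atTop_nhds_zero
      have := ((ha.const_mul 2).add (hb.const_mul 2))
      simpa [mul_add, add_mul, mul_comm, mul_assoc, mul_left_comm] using this
    have h2 : Filter.Tendsto (fun r : ℝ => r^2/2) Filter.atTop Filter.atTop := by
      apply Filter.Tendsto.atTop_div_const (by norm_num)
      exact Filter.tendsto_pow_atTop (by norm_num)
    have := h1.comp h2
    have heq : (fun r : ℝ => -(r^2+2) * Real.exp (-r^2/2))
        = fun r => -(((2*(r^2/2)+2) * Real.exp (-(r^2/2)))) := by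
      funext r; ring_nf
    rw [heq]
    simpa using this.neg

open Set in
/-- The angular integral. -/
lemma relu_angular_integral (ρ : ℝ) (hρ : ρ ∈ Set.Ioo (-1:ℝ) 1) :
    ∫ θ in Ioo (-π) π, max (Real.cos θ) 0 * max (ρ * Real.cos θ + Real.sqrt (1-ρ^2) * Real.sin θ) 0
      = ρ*π/4 + Real.sqrt (1-ρ^2)/2 + ρ * Real.arcsin ρ / 2 := by
  obtain ⟨h1, h2⟩ := hρ
  set s := Real.sqrt (1-ρ^2) with hs_def
  set α := Real.arcsin ρ with hα_def
  have hs2 : s^2 = 1 - ρ^2 := Real.sq_sqrt (by nlinarith)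
  have hs_pos : 0 < s := Real.sqrt_pos.mpr (by nlinarith)
  have hαmem : α ∈ Ioo (-(π/2)) (π/2) :=
    ⟨Real.neg_pi_div_two_lt_arcsin.mpr h1, Real.arcsin_lt_pi_div_two.mpr h2⟩
  have hsinα : Real.sin α = ρ := Real.sin_arcsin (le_of_lt h1) (le_of_lt h2)
  have hcosα : Real.cos α = s := Real.cos_arcsin ρ
  have hπ : 0 < π := Real.pi_pos
  -- pointwise indicator identity on Ioo (-π) π
  have hind : ∀ θ ∈ Ioo (-π) π,
      max (Real.cos θ) 0 * max (ρ * Real.cos θ + s * Real.sin θ) 0 =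
      Set.indicator (Ioo (-α) (π/2)) (fun θ => Real.cos θ * (ρ * Real.cos θ + s * Real.sin θ)) θ := by
    intro θ hθ
    have hform : ρ * Real.cos θ + s * Real.sin θ = Real.sin (θ + α) := by
      rw [Real.sin_add, hsinα, hcosα]; ring
    by_cases hmem : θ ∈ Ioo (-α) (π/2)
    · rw [Set.indicator_of_mem hmem]
      have hcpos : 0 < Real.cos θ :=
        Real.cos_pos_of_mem_Ioo ⟨by cases hαmem; cases hmem; linarith, hmem.2⟩
      have hspos : 0 < Real.sin (θ + α) := by
        apply Real.sin_pos_of_pos_of_lt_pi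
        · cases hmem; linarith
        · cases hmem; cases hαmem; linarith
      rw [hform, max_eq_left hcpos.le, max_eq_left hspos.le]
    · rw [Set.indicator_of_notMem hmem]
      simp only [Set.mem_Ioo, not_and_or, not_lt] at hmem
      rcases hmem with hle | hge
      · -- θ ≤ -α : second factor ≤ 0 or cos ≤ 0
        by_cases hc : θ ≤ -(π/2)
        · have : Real.cos θ ≤ 0 := by
            rw [← Real.cos_neg]
            apply Real.cos_nonpos_of_pi_div_two_le_of_le (by linarith)
            cases hθ; linarith
          rw [max_eq_right this]; ring
        · push_neg at hc
          have : Real.sin (θ + α) ≤ 0 := by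
            apply Real.sin_nonpos_of_nonpos_of_neg_pi_le (by linarith)
            cases hαmem; linarith
          rw [hform, max_eq_right this]; ring
      · have : Real.cos θ ≤ 0 := by
          apply Real.cos_nonpos_of_pi_div_two_le_of_le hge
          cases hθ; linarith
        rw [max_eq_right this]; ring
  rw [setIntegral_congr_fun measurableSet_Ioo hind]
  rw [setIntegral_indicator measurableSet_Ioo]
  have hinter : Ioo (-π) π ∩ Ioo (-α) (π/2) = Ioo (-α) (π/2) := by
    apply Set.inter_eq_self_of_subset_right
    apply Set.Ioo_subset_Ioo <;> cases hαmem <;> linarith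
  rw [hinter]
  have hab : -α ≤ π/2 := by cases hαmem; linarith
  rw [← integral_Ioc_eq_integral_Ioo, ← intervalIntegral.integral_of_le hab]
  -- FTC
  have key : ∀ θ ∈ Set.uIcc (-α) (π/2), HasDerivAt
      (fun t => ρ*(t/2 + Real.sin (2*t)/4) + s*(Real.sin t)^2/2)
      (Real.cos θ * (ρ * Real.cos θ + s * Real.sin θ)) θ := by
    intro θ _
    have d1 : HasDerivAt (fun t : ℝ => Real.sin (2*t)) (Real.cos (2*θ) * 2) θ :=
      (Real.hasDerivAt_sin (2*θ)).comp θ (by simpa using (hasDerivAt_id θ).const_mul 2)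
    have d2 : HasDerivAt (fun t : ℝ => (Real.sin t)^2) (2 * Real.sin θ * Real.cos θ) θ := by
      have := (Real.hasDerivAt_sin θ)
      exact (this.pow 2).congr_deriv (by norm_num)
    have d3 : HasDerivAt (fun t : ℝ => t/2 + Real.sin (2*t)/4) (1/2 + (Real.cos (2*θ)*2)/4) θ :=
      ((hasDerivAt_id θ).div_const 2).add (d1.div_const 4)
    have := (d3.const_mul ρ).add ((d2.const_mul s).div_const 2)
    exact this.congr_deriv (by rw [Real.cos_two_mul]; ring)
  rw [intervalIntegral.integral_eq_sub_of_hasDerivAt key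
    (Continuous.intervalIntegrable (by continuity) _ _)]
  simp only [Real.sin_pi, Real.sin_pi_div_two, Real.sin_neg, hsinα]
  have : Real.sin (2 * -α) = -(2 * ρ * s) := by
    rw [Real.sin_two_mul, Real.sin_neg, Real.cos_neg, hsinα, hcosα]; ring
  rw [show (2:ℝ) * (π/2) = π by ring, Real.sin_pi, this]
  ring

open Set in
theorem relu_product_moment_std (ρ : ℝ) (hρ : ρ ∈ Set.Ioo (-1 : ℝ) 1) :
    ∫ p : ℝ × ℝ, max p.1 0 * max p.2 0 * biPdfStd ρ p.1 p.2 =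
      (1 / (2 * Real.pi)) * (ρ * Real.arcsin ρ + Real.sqrt (1 - ρ^2)) + ρ / 4 := by
  obtain ⟨h1, h2⟩ := hρ
  set s := Real.sqrt (1-ρ^2) with hs_def
  have hs2 : s^2 = 1 - ρ^2 := Real.sq_sqrt (by nlinarith)
  have hs_pos : 0 < s := Real.sqrt_pos.mpr (by nlinarith)
  -- Step 1: linear change of variables (u, v) ↦ (u, ρu + sv)
  have step1 : ∫ p : ℝ × ℝ, max p.1 0 * max p.2 0 * biPdfStd ρ p.1 p.2 =
      ∫ q : ℝ × ℝ, max q.1 0 * max (ρ * q.1 + s * q.2) 0 *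
        ((2 * π)⁻¹ * Real.exp (-(q.1^2 + q.2^2)/2)) := by
    set T : ℝ × ℝ → ℝ × ℝ := fun q => (q.1, ρ * q.1 + s * q.2) with hT_def
    set B : ℝ × ℝ →L[ℝ] ℝ × ℝ :=
      LinearMap.toContinuousLinearMap (Matrix.toLin (Module.Basis.finTwoProd ℝ) (Module.Basis.finTwoProd ℝ)
        !![1, 0; ρ, s]) with hB_def
    have hBapp : ∀ q : ℝ × ℝ, B q = T q := by
      intro q
      rw [hB_def, Matrix.toLin_finTwoProd_toContinuousLinearMap]
      simp [hT_def]
    have hBdet : B.det = s := by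
      rw [hB_def]
      simp only [LinearMap.det_toContinuousLinearMap, LinearMap.det_toLin,
        Matrix.det_fin_two_of]
      ring
    have hTinj : Function.Injective T := by
      intro a b hab
      simp only [hT_def, Prod.mk.injEq] at hab
      obtain ⟨ha, hb⟩ := hab
      refine Prod.ext ha ?_
      rw [ha] at hb
      exact mul_left_cancel₀ (ne_of_gt hs_pos) (by linarith)
    have hTsurj : Function.Surjective T := by
      intro p
      exact ⟨(p.1, (p.2 - ρ * p.1)/s), by simp [hT_def]; field_simp; simp⟩
    have himg : T '' Set.univ = Set.univ := by
      rw [Set.image_univ]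
      exact hTsurj.range_eq
    have hCoV := integral_image_eq_integral_abs_det_fderiv_smul (μ := volume)
      MeasurableSet.univ
      (f' := fun _ => B)
      (fun x _ => (B.hasFDerivAt.congr_fderiv rfl).hasFDerivWithinAt.congr
        (fun y _ => (hBapp y).symm) (hBapp x).symm)
      (hTinj.injOn) (fun p => max p.1 0 * max p.2 0 * biPdfStd ρ p.1 p.2)
    rw [himg, setIntegral_univ, setIntegral_univ] at hCoV
    rw [hCoV]
    congr 1
    funext q
    rw [hBdet, abs_of_pos hs_pos]
    show s * (max q.1 0 * max (ρ * q.1 + s * q.2) 0 * biPdfStd ρ q.1 (ρ * q.1 + s * q.2)) = _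
    have hexp : -(1 / (2 * (1 - ρ^2))) *
        (q.1^2 - 2 * ρ * q.1 * (ρ * q.1 + s * q.2) + (ρ * q.1 + s * q.2)^2)
        = -(q.1^2 + q.2^2)/2 := by
      rw [← hs2]
      field_simp
      linear_combination (q.1^2) * hs2
    rw [biPdfStd, hexp]
    rw [← hs_def]
    field_simp
  -- Step 2: polar coordinates
  have step2 : ∫ q : ℝ × ℝ, max q.1 0 * max (ρ * q.1 + s * q.2) 0 *
      ((2 * π)⁻¹ * Real.exp (-(q.1^2 + q.2^2)/2)) =
      (∫ r in Ioi (0:ℝ), r^3 * Real.exp (-r^2/2)) *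
        ((2 * π)⁻¹ * ∫ θ in Ioo (-π) π,
          max (Real.cos θ) 0 * max (ρ * Real.cos θ + s * Real.sin θ) 0) := by
    rw [← integral_comp_polarCoord_symm]
    have htarget : polarCoord.target = Ioi (0:ℝ) ×ˢ Ioo (-π) π := rfl
    have hsymm : ∀ p : ℝ × ℝ,
        polarCoord.symm p = (p.1 * Real.cos p.2, p.1 * Real.sin p.2) := fun _ => rfl
    have hcongr : ∀ p ∈ polarCoord.target,
        p.1 • (max (polarCoord.symm p).1 0 *
          max (ρ * (polarCoord.symm p).1 + s * (polarCoord.symm p).2) 0 *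
          ((2 * π)⁻¹ * Real.exp (-((polarCoord.symm p).1^2 + (polarCoord.symm p).2^2)/2))) =
        (p.1^3 * Real.exp (-p.1^2/2)) *
          ((2 * π)⁻¹ * (max (Real.cos p.2) 0 * max (ρ * Real.cos p.2 + s * Real.sin p.2) 0)) := by
      rintro ⟨r, θ⟩ hp
      rw [htarget] at hp
      have hr : 0 < r := hp.1
      rw [hsymm]
      simp only
      have emax : ∀ c : ℝ, max (r * c) 0 = r * max c 0 := by
        intro c
        rcases le_total c 0 with h | h
        · rw [max_eq_right h, max_eq_right (by nlinarith), mul_zero]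
        · rw [max_eq_left h, max_eq_left (mul_nonneg hr.le h)]
      have e1 : max (r * Real.cos θ) 0 = r * max (Real.cos θ) 0 := emax _
      have e2 : max (ρ * (r * Real.cos θ) + s * (r * Real.sin θ)) 0
          = r * max (ρ * Real.cos θ + s * Real.sin θ) 0 := by
        rw [show ρ * (r * Real.cos θ) + s * (r * Real.sin θ)
          = r * (ρ * Real.cos θ + s * Real.sin θ) by ring]
        exact emax _
      have e3 : -((r * Real.cos θ)^2 + (r * Real.sin θ)^2)/2 = -r^2/2 := by
        have := Real.sin_sq_add_cos_sq θ
        nlinarith [this]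
      rw [e1, e2, e3, smul_eq_mul]
      ring
    rw [setIntegral_congr_fun (polarCoord.open_target.measurableSet) hcongr]
    rw [htarget, Measure.volume_eq_prod, ← Measure.prod_restrict]
    rw [integral_prod_mul (μ := volume.restrict (Ioi 0)) (ν := volume.restrict (Ioo (-π) π))
      (f := fun r : ℝ => r^3 * Real.exp (-r^2/2))
      (g := fun θ : ℝ => (2 * π)⁻¹ *
        (max (Real.cos θ) 0 * max (ρ * Real.cos θ + s * Real.sin θ) 0)),
      integral_const_mul]
  rw [step1, step2, relu_radial_integral, relu_angular_integral ρ ⟨h1, h2⟩]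
  have hπ : (0:ℝ) < π := Real.pi_pos
  rw [← hs_def]
  field_simp
  ring
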